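/- Grothendieck's identity: let g be a standard Gaussian vector in R^n and u, v unit vectors in R^n. Then E[sign(⟨g, u⟩)·sign(⟨g, v⟩)] = (2/π)·arcsin(⟨u, v⟩). -/

import Mathlib

open Finset MeasureTheory ProbabilityTheory Real Set
open scoped ENNReal NNReal RealInnerProductSpace


lemma measurable_realSign : Measurable Real.sign := by
  unfold Real.sign
  exact Measurable.ite (measurableSet_lt measurable_id measurable_const) measurable_const
    (Measurable.ite (measurableSet_lt measurable_const measurable_id) measurable_const
      measurable_const)

lemma sign_mul_of_pos {r : ℝ} (hr : 0 < r) (x : ℝ) : Real.sign (r * x) = Real.sign x := by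
  rcases lt_trichotomy x 0 with h | h | h
  · rw [Real.sign_of_neg h, Real.sign_of_neg (mul_neg_of_pos_of_neg hr h)]
  · simp [h]
  · rw [Real.sign_of_pos h, Real.sign_of_pos (mul_pos hr h)]

/-- map of withDensity under a measurable equivalence. -/
lemma map_withDensity_equiv {α β : Type*} [MeasurableSpace α] [MeasurableSpace β]
    (μ : Measure α) (e : α ≃ᵐ β) {g : α → ℝ≥0∞} (hg : Measurable g) :
    (μ.withDensity g).map e = (μ.map e).withDensity (g ∘ e.symm) := by
  ext s hs
  rw [Measure.map_apply e.measurable hs, withDensity_apply _ (e.measurable hs),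
    withDensity_apply _ hs, Measure.restrict_map e.measurable hs,
    lintegral_map (hg.comp e.symm.measurable) e.measurable]
  simp

/-- product of withDensity measures -/
lemma prod_withDensity {α β : Type*} [MeasurableSpace α] [MeasurableSpace β]
    (μ : Measure α) (ν : Measure β) [SigmaFinite μ] [SigmaFinite ν]
    {f : α → ℝ≥0∞} {g : β → ℝ≥0∞} (hf : Measurable f) (hg : Measurable g)
    [SigmaFinite (μ.withDensity f)] [SigmaFinite (ν.withDensity g)] :
    (μ.withDensity f).prod (ν.withDensity g)
      = (μ.prod ν).withDensity (fun p => f p.1 * g p.2) := by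
  refine Measure.prod_eq fun s t hs ht => ?_
  rw [withDensity_apply _ (hs.prod ht), ← Measure.prod_restrict,
    lintegral_prod_mul hf.aemeasurable hg.aemeasurable,
    withDensity_apply _ hs, withDensity_apply _ ht]

lemma gauss_pi (n : ℕ) :
    (Measure.pi fun _ : Fin n => gaussianReal 0 1)
      = (volume : Measure (Fin n → ℝ)).withDensity
          (fun x => ENNReal.ofReal (∏ i, gaussianPDFReal 0 1 (x i))) := by
  refine Measure.pi_eq fun s hs => ?_
  rw [withDensity_apply _ (MeasurableSet.univ_pi hs)]
  have hint : IntegrableOn (fun x : Fin n → ℝ => ∏ i, gaussianPDFReal 0 1 (x i))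
      (Set.univ.pi s) :=
    (Integrable.fintype_prod (fun _ => integrable_gaussianPDFReal 0 1)).integrableOn
  rw [← ofReal_integral_eq_lintegral_ofReal hint
    (ae_of_all _ fun x => Finset.prod_nonneg fun i _ => gaussianPDFReal_nonneg 0 1 (x i))]
  have hind : (Set.univ.pi s).indicator (fun x : Fin n → ℝ => ∏ i, gaussianPDFReal 0 1 (x i))
      = fun x => ∏ i, (s i).indicator (gaussianPDFReal 0 1) (x i) := by
    funext x
    by_cases hx : x ∈ Set.univ.pi s
    · rw [Set.indicator_of_mem hx]
      exact Finset.prod_congr rfl fun i _ => (Set.indicator_of_mem (hx i trivial) _).symm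
    · rw [Set.indicator_of_notMem hx]
      have : ∃ i, x i ∉ s i := by simpa [Set.mem_pi] using hx
      obtain ⟨i, hi⟩ := this
      symm
      exact Finset.prod_eq_zero (Finset.mem_univ i) (Set.indicator_of_notMem hi _)
  rw [← integral_indicator (MeasurableSet.univ_pi hs), hind]
  beta_reduce
  rw [integral_fintype_prod_volume_eq_prod (fun _ => (s _).indicator (gaussianPDFReal 0 1))]
  rw [ENNReal.ofReal_prod_of_nonneg fun i _ =>
    integral_nonneg fun x => Set.indicator_nonneg (fun y _ => gaussianPDFReal_nonneg 0 1 y) x]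
  refine Finset.prod_congr rfl fun i _ => ?_
  rw [integral_indicator (hs i)]
  exact (gaussianReal_apply_eq_integral 0 one_ne_zero (s i)).symm

def EuclideanSpace.measurableEquiv (ι : Type*) [Fintype ι] : EuclideanSpace ℝ ι ≃ᵐ (ι → ℝ) :=
  (MeasurableEquiv.toLp 2 (ι → ℝ)).symm

theorem EuclideanSpace.volume_preserving_measurableEquiv (ι : Type*) [Fintype ι] :
    MeasurePreserving (EuclideanSpace.measurableEquiv ι) :=
  EuclideanSpace.volume_preserving_symm_measurableEquiv_toLp ι

lemma sum_sq_eq_normsq {n : ℕ} (x : EuclideanSpace ℝ (Fin n)) :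
    ∑ i, x i ^ 2 = ‖x‖ ^ 2 := by
  rw [← real_inner_self_eq_norm_sq, PiLp.inner_apply]
  simp [pow_two, RCLike.inner_apply]

lemma prod_pdf {n : ℕ} (y : Fin n → ℝ) :
    ∏ i, gaussianPDFReal 0 1 (y i)
      = (Real.sqrt (2 * π))⁻¹ ^ n * Real.exp (-(∑ i, (y i) ^ 2) / 2) := by
  simp only [gaussianPDFReal, NNReal.coe_one, mul_one, sub_zero]
  rw [Finset.prod_mul_distrib, Finset.prod_const, Finset.card_univ, Fintype.card_fin,
    ← Real.exp_sum]
  have : ∑ x : Fin n, -y x ^ 2 / 2 = (-∑ i : Fin n, y i ^ 2) / 2 := by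
    rw [← Finset.sum_div, ← Finset.sum_neg_distrib]
  rw [this]

lemma gauss_map_isometry {n : ℕ}
    (f : EuclideanSpace ℝ (Fin n) ≃ₗᵢ[ℝ] EuclideanSpace ℝ (Fin n)) :
    (Measure.pi fun _ : Fin n => gaussianReal 0 1).map
      (((EuclideanSpace.measurableEquiv (Fin n)).symm.trans
        f.toHomeomorph.toMeasurableEquiv).trans (EuclideanSpace.measurableEquiv (Fin n)))
      = Measure.pi fun _ : Fin n => gaussianReal 0 1 := by
  set e := EuclideanSpace.measurableEquiv (Fin n) with he
  set T := (e.symm.trans f.toHomeomorph.toMeasurableEquiv).trans e with hT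
  have hD : Measurable (fun x : Fin n → ℝ => ENNReal.ofReal (∏ i, gaussianPDFReal 0 1 (x i))) :=
    ENNReal.measurable_ofReal.comp
      (Finset.measurable_prod _ fun i _ =>
        (measurable_gaussianPDFReal 0 1).comp (measurable_pi_apply i))
  have hvolT : MeasurePreserving T volume volume := by
    have h1 : MeasurePreserving (⇑e) volume volume :=
      EuclideanSpace.volume_preserving_measurableEquiv (Fin n)
    have h2 : MeasurePreserving (⇑f) volume volume := f.measurePreserving
    exact h1.comp (h2.comp h1.symm)
  rw [gauss_pi, map_withDensity_equiv _ T hD, hvolT.map_eq]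
  congr 1
  funext x
  have hsymm : (T.symm x : Fin n → ℝ) = (f.symm (WithLp.toLp 2 x) : Fin n → ℝ) := rfl
  rw [Function.comp_apply, hsymm]
  congr 1
  rw [prod_pdf, prod_pdf]
  have : ∑ i, (f.symm (WithLp.toLp 2 x)) i ^ 2 = ∑ i, x i ^ 2 := by
    rw [sum_sq_eq_normsq, f.symm.norm_map]
    exact (sum_sq_eq_normsq (WithLp.toLp 2 x)).symm
  rw [this]


lemma pi_map_pair {n : ℕ} (i j : Fin n) (hij : i ≠ j) :
    (Measure.pi fun _ : Fin n => gaussianReal 0 1).map (fun x => (x i, x j))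
      = (gaussianReal 0 1).prod (gaussianReal 0 1) := by
  classical
  refine (Measure.prod_eq fun s t hs ht => ?_).symm
  rw [Measure.map_apply ((measurable_pi_apply i).prodMk (measurable_pi_apply j)) (hs.prod ht)]
  have hpre : (fun x : Fin n → ℝ => (x i, x j)) ⁻¹' (s ×ˢ t)
      = Set.univ.pi (fun k => if k = i then s else if k = j then t else Set.univ) := by
    ext x
    simp only [Set.mem_preimage, Set.mem_prod, Set.mem_pi, Set.mem_univ, forall_true_left]
    constructor
    · rintro ⟨h1, h2⟩ k
      split_ifs with h h'
      · exact h ▸ h1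
      · exact h' ▸ h2
      · trivial
    · intro h
      refine ⟨?_, ?_⟩
      · have := h i; simpa using this
      · have := h j; simpa [hij.symm] using this
  rw [hpre, Measure.pi_pi]
  rw [← Finset.prod_subset (Finset.subset_univ ({i, j} : Finset (Fin n)))
    (fun k _ hk => ?_), Finset.prod_pair hij]
  · simp [hij.symm]
  · simp only [Finset.mem_insert, Finset.mem_singleton, not_or] at hk
    simp [hk.1, hk.2]

lemma pi_map_eval {n : ℕ} (i : Fin n) :
    (Measure.pi fun _ : Fin n => gaussianReal 0 1).map (fun x => x i)
      = gaussianReal 0 1 := by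
  classical
  ext s hs
  rw [Measure.map_apply (measurable_pi_apply i) hs]
  have hpre : (fun x : Fin n → ℝ => x i) ⁻¹' s
      = Set.univ.pi (fun k => if k = i then s else Set.univ) := by
    ext x
    simp only [Set.mem_preimage, Set.mem_pi, Set.mem_univ, forall_true_left]
    constructor
    · intro h k; split_ifs with hk
      · exact hk ▸ h
      · trivial
    · intro h; have := h i; simpa using this
  rw [hpre, Measure.pi_pi]
  rw [← Finset.prod_subset (Finset.subset_univ ({i} : Finset (Fin n))) (fun k _ hk => ?_),
    Finset.prod_singleton]
  · simp
  · simp only [Finset.mem_singleton] at hk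
    simp [hk]


lemma euclid_inner_eq {n : ℕ} (x y : EuclideanSpace ℝ (Fin n)) : ⟪x, y⟫ = ∑ i, x i * y i := by
  rw [PiLp.inner_apply]; simp [RCLike.inner_apply, mul_comm]

lemma repr_symm_inner {n : ℕ} (b : OrthonormalBasis (Fin n) ℝ (EuclideanSpace ℝ (Fin n)))
    (g : EuclideanSpace ℝ (Fin n)) (i : Fin n) :
    ⟪b.repr.symm g, b i⟫ = g i := by
  rw [← b.repr.inner_map_map, b.repr.apply_symm_apply, b.repr_self,
    EuclideanSpace.inner_single_right]
  simp

/-- The image of the standard Gaussian under pairing with two orthonormal vectors. -/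
lemma map_inner_pair {n : ℕ} (hn : 1 < n) (u w : EuclideanSpace ℝ (Fin n))
    (hu : ‖u‖ = 1) (hw : ‖w‖ = 1) (huw : ⟪u, w⟫ = 0) :
    (Measure.pi fun _ : Fin n => gaussianReal 0 1).map
      (fun g : Fin n → ℝ => (∑ i, g i * u i, ∑ i, g i * w i))
      = (gaussianReal 0 1).prod (gaussianReal 0 1) := by
  classical
  haveI : NeZero n := ⟨by omega⟩
  have h01 : (0 : Fin n) ≠ 1 := by
    intro h
    have := congrArg Fin.val h
    simp [Fin.val_one, Nat.mod_eq_of_lt hn] at this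
  -- build an orthonormal basis with b 0 = u, b 1 = w
  set vv : Fin n → EuclideanSpace ℝ (Fin n) := fun k => if k = 0 then u else w with hvv
  have horth : Orthonormal ℝ (({0, 1} : Set (Fin n)).restrict vv) := by
    rw [orthonormal_iff_ite]
    rintro ⟨i, hi⟩ ⟨j, hj⟩
    simp only [Set.mem_insert_iff, Set.mem_singleton_iff] at hi hj
    have inner_uu : ⟪u, u⟫ = 1 := by rw [real_inner_self_eq_norm_sq, hu]; norm_num
    have inner_ww : ⟪w, w⟫ = 1 := by rw [real_inner_self_eq_norm_sq, hw]; norm_num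
    have inner_wu : ⟪w, u⟫ = 0 := by rw [real_inner_comm]; exact huw
    rcases hi with rfl | rfl <;> rcases hj with rfl | rfl <;>
      simp [vv, h01, h01.symm, inner_uu, inner_ww, huw, inner_wu, Subtype.ext_iff, hu, hw, Set.restrict]
  obtain ⟨b, hb⟩ := horth.exists_orthonormalBasis_extension_of_card_eq
    (by simp [finrank_euclideanSpace_fin])
  have hb0 : b 0 = u := by have := hb 0 (by simp); simpa [vv] using this
  have hb1 : b 1 = w := by have := hb 1 (by simp [h01.symm]); simpa [vv, h01.symm] using this
  set e := EuclideanSpace.measurableEquiv (Fin n)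
  set Te := (e.symm.trans (b.repr.symm.toHomeomorph.toMeasurableEquiv)).trans e with hTe
  have hP : Measurable (fun g : Fin n → ℝ => (∑ i, g i * u i, ∑ i, g i * w i)) := by
    refine Measurable.prodMk ?_ ?_ <;>
      exact Finset.measurable_sum _ fun i _ => (measurable_pi_apply i).mul measurable_const
  have key : ∀ g : Fin n → ℝ,
      (fun g : Fin n → ℝ => (∑ i, g i * u i, ∑ i, g i * w i)) (Te g) = (g 0, g 1) := by
    intro g
    have hTg : (Te g : Fin n → ℝ) = (b.repr.symm (WithLp.toLp 2 g) : Fin n → ℝ) :=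
      rfl
    simp only [hTg]
    have h1 : ∑ i, (b.repr.symm (WithLp.toLp 2 g)) i * u i = g 0 := by
      rw [← euclid_inner_eq, ← hb0, repr_symm_inner]
    have h2 : ∑ i, (b.repr.symm (WithLp.toLp 2 g)) i * w i = g 1 := by
      rw [← euclid_inner_eq, ← hb1, repr_symm_inner]
    rw [h1, h2]
  calc (Measure.pi fun _ : Fin n => gaussianReal 0 1).map
        (fun g : Fin n → ℝ => (∑ i, g i * u i, ∑ i, g i * w i))
      = ((Measure.pi fun _ : Fin n => gaussianReal 0 1).map Te).map
        (fun g : Fin n → ℝ => (∑ i, g i * u i, ∑ i, g i * w i)) := by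
        rw [gauss_map_isometry b.repr.symm]
    _ = (Measure.pi fun _ : Fin n => gaussianReal 0 1).map
        ((fun g : Fin n → ℝ => (∑ i, g i * u i, ∑ i, g i * w i)) ∘ Te) :=
        Measure.map_map hP Te.measurable
    _ = (Measure.pi fun _ : Fin n => gaussianReal 0 1).map (fun g => (g 0, g 1)) := by
        congr 1; funext g; exact key g
    _ = (gaussianReal 0 1).prod (gaussianReal 0 1) := pi_map_pair 0 1 h01

lemma map_inner_single {n : ℕ} [NeZero n] (u : EuclideanSpace ℝ (Fin n)) (hu : ‖u‖ = 1) :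
    (Measure.pi fun _ : Fin n => gaussianReal 0 1).map
      (fun g : Fin n → ℝ => ∑ i, g i * u i) = gaussianReal 0 1 := by
  classical
  have horth : Orthonormal ℝ (({0} : Set (Fin n)).restrict (fun _ : Fin n => u)) := by
    rw [orthonormal_iff_ite]
    rintro ⟨i, hi⟩ ⟨j, hj⟩
    simp only [Set.mem_singleton_iff] at hi hj
    subst hi; subst hj
    have inner_uu : ⟪u, u⟫ = 1 := by rw [real_inner_self_eq_norm_sq, hu]; norm_num
    simp [inner_uu, hu, Set.restrict]
  obtain ⟨b, hb⟩ := horth.exists_orthonormalBasis_extension_of_card_eq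
    (by simp [finrank_euclideanSpace_fin])
  have hb0 : b 0 = u := hb 0 (by simp)
  set e := EuclideanSpace.measurableEquiv (Fin n)
  set Te := (e.symm.trans (b.repr.symm.toHomeomorph.toMeasurableEquiv)).trans e with hTe
  have hP : Measurable (fun g : Fin n → ℝ => ∑ i, g i * u i) :=
    Finset.measurable_sum _ fun i _ => (measurable_pi_apply i).mul measurable_const
  have key : ∀ g : Fin n → ℝ,
      (fun g : Fin n → ℝ => ∑ i, g i * u i) (Te g) = g 0 := by
    intro g
    have hTg : (Te g : Fin n → ℝ) = (b.repr.symm (WithLp.toLp 2 g) : Fin n → ℝ) :=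
      rfl
    simp only [hTg]
    rw [← euclid_inner_eq, ← hb0, repr_symm_inner]
  calc (Measure.pi fun _ : Fin n => gaussianReal 0 1).map (fun g : Fin n → ℝ => ∑ i, g i * u i)
      = ((Measure.pi fun _ : Fin n => gaussianReal 0 1).map Te).map
        (fun g : Fin n → ℝ => ∑ i, g i * u i) := by rw [gauss_map_isometry b.repr.symm]
    _ = (Measure.pi fun _ : Fin n => gaussianReal 0 1).map
        ((fun g : Fin n → ℝ => ∑ i, g i * u i) ∘ Te) := Measure.map_map hP Te.measurable
    _ = (Measure.pi fun _ : Fin n => gaussianReal 0 1).map (fun g => g 0) := by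
        congr 1; funext g; exact key g
    _ = gaussianReal 0 1 := pi_map_eval 0


lemma piece {h : ℝ → ℝ} {a b c : ℝ} (hab : a ≤ b) (hh : ∀ x ∈ Set.Ioo a b, h x = c) :
    ∫ x in a..b, h x = c * (b - a) := by
  rw [intervalIntegral.integral_of_le hab, integral_Ioc_eq_integral_Ioo,
    setIntegral_congr_fun measurableSet_Ioo hh, setIntegral_const, measureReal_def, Real.volume_Ioo,
    ENNReal.toReal_ofReal (by linarith), smul_eq_mul, mul_comm]

lemma pieceInt {h : ℝ → ℝ} {a b c : ℝ} (hab : a ≤ b) (hh : ∀ x ∈ Set.Ioo a b, h x = c) :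
    IntervalIntegrable h volume a b := by
  rw [intervalIntegrable_iff_integrableOn_Ioo_of_le hab]
  exact (integrableOn_const measure_Ioo_lt_top.ne).congr_fun
    (fun x hx => (hh x hx).symm) measurableSet_Ioo

lemma cos_pos' {x : ℝ} (h1 : -(π/2) < x) (h2 : x < π/2) : 0 < Real.cos x :=
  Real.cos_pos_of_mem_Ioo ⟨by linarith, h2⟩

lemma cos_neg' {x : ℝ} (h1 : π/2 < x) (h2 : x < π + π/2) : Real.cos x < 0 :=
  Real.cos_neg_of_pi_div_two_lt_of_lt h1 (by linarith)

lemma cos_neg'' {x : ℝ} (h1 : -(π + π/2) < x) (h2 : x < -(π/2)) : Real.cos x < 0 := by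
  rw [← Real.cos_neg]
  exact cos_neg' (by linarith) (by linarith)

lemma angular {φ : ℝ} (h0 : 0 < φ) (hπ : φ < π) :
    ∫ θ in (-π)..π, Real.sign (Real.cos θ) * Real.sign (Real.cos (θ - φ)) = 2*π - 4*φ := by
  have pi_pos := Real.pi_pos
  rcases le_or_gt φ (π/2) with hA | hB
  · -- case φ ≤ π/2
    have c1 : ∀ θ ∈ Set.Ioo (-π) (-(π/2)),
        Real.sign (Real.cos θ) * Real.sign (Real.cos (θ - φ)) = (1) := by
      rintro θ ⟨t1, t2⟩
      have d1 : Real.cos θ < 0 := cos_neg'' (by linarith) (by linarith)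
      have d2 : Real.cos (θ - φ) < 0 := cos_neg'' (by linarith) (by linarith)
      rw [Real.sign_of_neg d1, Real.sign_of_neg d2]
      norm_num
    have c2 : ∀ θ ∈ Set.Ioo (-(π/2)) (φ - π/2),
        Real.sign (Real.cos θ) * Real.sign (Real.cos (θ - φ)) = (-1) := by
      rintro θ ⟨t1, t2⟩
      have d1 : 0 < Real.cos θ := cos_pos' (by linarith) (by linarith)
      have d2 : Real.cos (θ - φ) < 0 := cos_neg'' (by linarith) (by linarith)
      rw [Real.sign_of_pos d1, Real.sign_of_neg d2]
      norm_num
    have c3 : ∀ θ ∈ Set.Ioo (φ - π/2) (π/2),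
        Real.sign (Real.cos θ) * Real.sign (Real.cos (θ - φ)) = (1) := by
      rintro θ ⟨t1, t2⟩
      have d1 : 0 < Real.cos θ := cos_pos' (by linarith) (by linarith)
      have d2 : 0 < Real.cos (θ - φ) := cos_pos' (by linarith) (by linarith)
      rw [Real.sign_of_pos d1, Real.sign_of_pos d2]
      norm_num
    have c4 : ∀ θ ∈ Set.Ioo (π/2) (φ + π/2),
        Real.sign (Real.cos θ) * Real.sign (Real.cos (θ - φ)) = (-1) := by
      rintro θ ⟨t1, t2⟩
      have d1 : Real.cos θ < 0 := cos_neg' (by linarith) (by linarith)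
      have d2 : 0 < Real.cos (θ - φ) := cos_pos' (by linarith) (by linarith)
      rw [Real.sign_of_neg d1, Real.sign_of_pos d2]
      norm_num
    have c5 : ∀ θ ∈ Set.Ioo (φ + π/2) (π),
        Real.sign (Real.cos θ) * Real.sign (Real.cos (θ - φ)) = (1) := by
      rintro θ ⟨t1, t2⟩
      have d1 : Real.cos θ < 0 := cos_neg' (by linarith) (by linarith)
      have d2 : Real.cos (θ - φ) < 0 := cos_neg' (by linarith) (by linarith)
      rw [Real.sign_of_neg d1, Real.sign_of_neg d2]
      norm_num
    have i1 := pieceInt (by linarith) c1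
    have i2 := pieceInt (by linarith) c2
    have i3 := pieceInt (by linarith) c3
    have i4 := pieceInt (by linarith) c4
    have i5 := pieceInt (by linarith) c5
    have e1 := piece (by linarith) c1
    have e2 := piece (by linarith) c2
    have e3 := piece (by linarith) c3
    have e4 := piece (by linarith) c4
    have e5 := piece (by linarith) c5
    rw [← intervalIntegral.integral_add_adjacent_intervals i1 (i2.trans (i3.trans (i4.trans i5))),
      ← intervalIntegral.integral_add_adjacent_intervals i2 (i3.trans (i4.trans i5)),
      ← intervalIntegral.integral_add_adjacent_intervals i3 (i4.trans i5),
      ← intervalIntegral.integral_add_adjacent_intervals i4 i5,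
      e1, e2, e3, e4, e5]
    ring
  · -- case π/2 < φ
    have c1 : ∀ θ ∈ Set.Ioo (-π) (φ - 3*π/2),
        Real.sign (Real.cos θ) * Real.sign (Real.cos (θ - φ)) = (-1) := by
      rintro θ ⟨t1, t2⟩
      have d1 : Real.cos θ < 0 := cos_neg'' (by linarith) (by linarith)
      have d2 : 0 < Real.cos (θ - φ) := by
        rw [← Real.cos_add_two_pi]
        exact cos_pos' (by linarith) (by linarith)
      rw [Real.sign_of_neg d1, Real.sign_of_pos d2]
      norm_num
    have c2 : ∀ θ ∈ Set.Ioo (φ - 3*π/2) (-(π/2)),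
        Real.sign (Real.cos θ) * Real.sign (Real.cos (θ - φ)) = (1) := by
      rintro θ ⟨t1, t2⟩
      have d1 : Real.cos θ < 0 := cos_neg'' (by linarith) (by linarith)
      have d2 : Real.cos (θ - φ) < 0 := cos_neg'' (by linarith) (by linarith)
      rw [Real.sign_of_neg d1, Real.sign_of_neg d2]
      norm_num
    have c3 : ∀ θ ∈ Set.Ioo (-(π/2)) (φ - π/2),
        Real.sign (Real.cos θ) * Real.sign (Real.cos (θ - φ)) = (-1) := by
      rintro θ ⟨t1, t2⟩
      have d1 : 0 < Real.cos θ := cos_pos' (by linarith) (by linarith)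
      have d2 : Real.cos (θ - φ) < 0 := cos_neg'' (by linarith) (by linarith)
      rw [Real.sign_of_pos d1, Real.sign_of_neg d2]
      norm_num
    have c4 : ∀ θ ∈ Set.Ioo (φ - π/2) (π/2),
        Real.sign (Real.cos θ) * Real.sign (Real.cos (θ - φ)) = (1) := by
      rintro θ ⟨t1, t2⟩
      have d1 : 0 < Real.cos θ := cos_pos' (by linarith) (by linarith)
      have d2 : 0 < Real.cos (θ - φ) := cos_pos' (by linarith) (by linarith)
      rw [Real.sign_of_pos d1, Real.sign_of_pos d2]
      norm_num
    have c5 : ∀ θ ∈ Set.Ioo (π/2) (π),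
        Real.sign (Real.cos θ) * Real.sign (Real.cos (θ - φ)) = (-1) := by
      rintro θ ⟨t1, t2⟩
      have d1 : Real.cos θ < 0 := cos_neg' (by linarith) (by linarith)
      have d2 : 0 < Real.cos (θ - φ) := cos_pos' (by linarith) (by linarith)
      rw [Real.sign_of_neg d1, Real.sign_of_pos d2]
      norm_num
    have i1 := pieceInt (by linarith) c1
    have i2 := pieceInt (by linarith) c2
    have i3 := pieceInt (by linarith) c3
    have i4 := pieceInt (by linarith) c4
    have i5 := pieceInt (by linarith) c5
    have e1 := piece (by linarith) c1
    have e2 := piece (by linarith) c2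
    have e3 := piece (by linarith) c3
    have e4 := piece (by linarith) c4
    have e5 := piece (by linarith) c5
    rw [← intervalIntegral.integral_add_adjacent_intervals i1 (i2.trans (i3.trans (i4.trans i5))),
      ← intervalIntegral.integral_add_adjacent_intervals i2 (i3.trans (i4.trans i5)),
      ← intervalIntegral.integral_add_adjacent_intervals i3 (i4.trans i5),
      ← intervalIntegral.integral_add_adjacent_intervals i4 i5,
      e1, e2, e3, e4, e5]
    ring


-- step 1 : the product gaussian as density over ℝ²
lemma gauss_prod :
    (gaussianReal 0 1).prod (gaussianReal 0 1)
      = (volume : Measure (ℝ × ℝ)).withDensity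
          (fun p => ((Real.toNNReal (gaussianPDFReal 0 1 p.1 * gaussianPDFReal 0 1 p.2) : ℝ≥0)
            : ℝ≥0∞)) := by
  haveI : SigmaFinite (volume.withDensity (gaussianPDF 0 1)) := by
    rw [← gaussianReal_of_var_ne_zero 0 one_ne_zero]; infer_instance
  rw [gaussianReal_of_var_ne_zero 0 one_ne_zero]
  rw [Measure.volume_eq_prod, prod_withDensity volume volume
    (measurable_gaussianPDF 0 1) (measurable_gaussianPDF 0 1)]
  congr 1
  funext p
  show ENNReal.ofReal (gaussianPDFReal 0 1 p.1) * ENNReal.ofReal (gaussianPDFReal 0 1 p.2) = _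
  rw [← ENNReal.ofReal_mul (gaussianPDFReal_nonneg 0 1 p.1)]
  rfl

-- radial integral
lemma radial : ∫ r in Set.Ioi (0:ℝ), r * ((2*π)⁻¹ * Real.exp (-r^2/2)) = (2*π)⁻¹ := by
  have hderiv : ∀ r ∈ Set.Ici (0:ℝ),
      HasDerivAt (fun t : ℝ => -(2*π)⁻¹ * Real.exp (-t^2/2))
        (r * ((2*π)⁻¹ * Real.exp (-r^2/2))) r := by
    intro r _
    have h1 : HasDerivAt (fun t : ℝ => -t^2/2) (-r) r := by
      have := ((hasDerivAt_pow 2 r).div_const 2).neg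
      simpa [neg_div, Pi.neg_def] using this
    have h2 := (Real.hasDerivAt_exp (-r^2/2)).comp r h1
    have h3 := h2.const_mul (-(2*π)⁻¹)
    exact h3.congr_deriv (by ring)
  have hint : IntegrableOn (fun r : ℝ => r * ((2*π)⁻¹ * Real.exp (-r^2/2))) (Set.Ioi 0) := by
    have h := (integrable_mul_exp_neg_mul_sq (b := 1/2) (by norm_num)).const_mul ((2*π)⁻¹)
    have : (fun x : ℝ => (2*π)⁻¹ * (x * Real.exp (-(1/2) * x^2)))
        = fun r : ℝ => r * ((2*π)⁻¹ * Real.exp (-r^2/2)) := by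
      funext x; ring_nf
    rw [this] at h
    exact h.integrableOn
  have htend : Filter.Tendsto (fun t : ℝ => -(2*π)⁻¹ * Real.exp (-t^2/2))
      Filter.atTop (nhds 0) := by
    have h1 : Filter.Tendsto (fun t : ℝ => t^2/2) Filter.atTop Filter.atTop :=
      (Filter.tendsto_pow_atTop two_ne_zero).atTop_div_const (by norm_num)
    have h2 : Filter.Tendsto (fun t : ℝ => Real.exp (-t^2/2)) Filter.atTop (nhds 0) := by
      have := Real.tendsto_exp_neg_atTop_nhds_zero.comp h1
      simpa [Function.comp_def, neg_div] using this
    have := h2.const_mul (-(2*π)⁻¹)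
    simpa using this
  have := MeasureTheory.integral_Ioi_of_hasDerivAt_of_tendsto' hderiv hint htend
  rw [this]
  simp

lemma twoD {ρ : ℝ} (hρ : |ρ| < 1) :
    ∫ p : ℝ × ℝ, Real.sign p.1 * Real.sign (ρ * p.1 + Real.sqrt (1 - ρ^2) * p.2)
      ∂((gaussianReal 0 1).prod (gaussianReal 0 1)) = 2 / π * Real.arcsin ρ := by
  have pi_pos := Real.pi_pos
  obtain ⟨hρ1, hρ2⟩ := abs_lt.mp hρ
  have hs2 : 0 < 1 - ρ^2 := by nlinarith
  set s := Real.sqrt (1 - ρ^2) with hsdef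
  have hs : 0 < s := Real.sqrt_pos.mpr hs2
  set φ := Real.arccos ρ with hφdef
  have hφ0 : 0 < φ := Real.arccos_pos.mpr hρ2
  have hφπ : φ < π := by
    rcases lt_or_eq_of_le (Real.arccos_le_pi ρ) with h | h
    · exact h
    · exact absurd (Real.arccos_eq_pi.mp h) (by linarith)
  have hcos : Real.cos φ = ρ := Real.cos_arccos (by linarith) (by linarith)
  have hsin : Real.sin φ = s := Real.sin_arccos ρ
  -- density form
  have hmeas : Measurable (fun p : ℝ × ℝ =>
      Real.toNNReal (gaussianPDFReal 0 1 p.1 * gaussianPDFReal 0 1 p.2)) :=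
    (((measurable_gaussianPDFReal 0 1).comp measurable_fst).mul
      ((measurable_gaussianPDFReal 0 1).comp measurable_snd)).real_toNNReal
  rw [gauss_prod, integral_withDensity_eq_integral_smul hmeas]
  -- polar coordinates
  rw [← integral_comp_polarCoord_symm]
  have hcongr : ∀ p ∈ polarCoord.target,
      p.1 • ((fun q : ℝ × ℝ =>
        (Real.toNNReal (gaussianPDFReal 0 1 q.1 * gaussianPDFReal 0 1 q.2)) •
          (Real.sign q.1 * Real.sign (ρ * q.1 + s * q.2))) (polarCoord.symm p))
      = (p.1 * ((2*π)⁻¹ * Real.exp (-p.1^2/2)))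
          * (Real.sign (Real.cos p.2) * Real.sign (Real.cos (p.2 - φ))) := by
    rintro ⟨r, θ⟩ hp
    rw [polarCoord_target] at hp
    obtain ⟨hr, hθ⟩ := hp
    simp only [Set.mem_Ioi] at hr
    rw [polarCoord_symm_apply]
    simp only [NNReal.smul_def, smul_eq_mul]
    have hpdf : gaussianPDFReal 0 1 (r * Real.cos θ) * gaussianPDFReal 0 1 (r * Real.sin θ)
        = (2*π)⁻¹ * Real.exp (-r^2/2) := by
      simp only [gaussianPDFReal, NNReal.coe_one, mul_one, sub_zero]
      rw [mul_mul_mul_comm, ← Real.exp_add, ← mul_inv, Real.mul_self_sqrt (by positivity)]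
      congr 1
      have := Real.sin_sq_add_cos_sq θ
      field_simp
      congr 1
      linear_combination (-r^2/2) * this
    have hpdfnn : (0:ℝ) ≤ gaussianPDFReal 0 1 (r * Real.cos θ) * gaussianPDFReal 0 1 (r * Real.sin θ) :=
      mul_nonneg (gaussianPDFReal_nonneg 0 1 _) (gaussianPDFReal_nonneg 0 1 _)
    rw [Real.coe_toNNReal _ hpdfnn, hpdf]
    have hsign1 : Real.sign (r * Real.cos θ) = Real.sign (Real.cos θ) := sign_mul_of_pos hr _
    have hsign2 : Real.sign (ρ * (r * Real.cos θ) + s * (r * Real.sin θ))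
        = Real.sign (Real.cos (θ - φ)) := by
      have harg : ρ * (r * Real.cos θ) + s * (r * Real.sin θ)
          = r * (Real.cos θ * Real.cos φ + Real.sin θ * Real.sin φ) := by
        rw [hcos, hsin]; ring
      rw [harg, ← Real.cos_sub, sign_mul_of_pos hr]
    rw [hsign1, hsign2]
    ring
  rw [setIntegral_congr_fun polarCoord.open_target.measurableSet hcongr]
  rw [polarCoord_target, Measure.volume_eq_prod, ← Measure.prod_restrict]
  have := integral_prod_mul (μ := volume.restrict (Set.Ioi (0:ℝ)))
    (ν := volume.restrict (Set.Ioo (-π) π))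
    (fun r : ℝ => r * ((2*π)⁻¹ * Real.exp (-r^2/2)))
    (fun θ : ℝ => Real.sign (Real.cos θ) * Real.sign (Real.cos (θ - φ)))
  rw [this, radial]
  have hang : ∫ θ in Set.Ioo (-π) π, Real.sign (Real.cos θ) * Real.sign (Real.cos (θ - φ))
      = 2*π - 4*φ := by
    rw [← integral_Ioc_eq_integral_Ioo, ← intervalIntegral.integral_of_le (by linarith)]
    exact angular hφ0 hφπ
  rw [hang]
  -- final arithmetic
  have harcsin : Real.arcsin ρ = π/2 - φ := by
    rw [hφdef, Real.arccos_eq_pi_div_two_sub_arcsin]; ring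
  rw [harcsin]
  field_simp
  ring


lemma norm_one_of_sum_sq {n : ℕ} {u : EuclideanSpace ℝ (Fin n)} (hu : ∑ i, u i ^ 2 = 1) :
    ‖u‖ = 1 := by
  have h1 : ⟪u, u⟫ = 1 := by
    rw [euclid_inner_eq]
    simpa [pow_two] using hu
  have h2 := real_inner_self_eq_norm_sq u
  nlinarith [norm_nonneg u]

lemma sign_sq_integral : ∫ x : ℝ, Real.sign x * Real.sign x ∂(gaussianReal 0 1) = 1 := by
  have h0 : (gaussianReal 0 1) {0} = 0 := by
    rw [gaussianReal_apply 0 one_ne_zero]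
    rw [setLIntegral_measure_zero _ _ (measure_singleton 0)]
  have hae : (fun x : ℝ => Real.sign x * Real.sign x) =ᵐ[gaussianReal 0 1] (fun _ => (1:ℝ)) := by
    refine measure_mono_null (fun x hx => ?_) h0
    simp only [Set.mem_setOf_eq, Set.mem_singleton_iff] at hx ⊢
    by_contra hx0
    rcases Real.sign_apply_eq_of_ne_zero x hx0 with h | h <;> simp [h] at hx
  rw [integral_congr_ae hae]
  simp

lemma stmt_aux {n : ℕ} (u v : EuclideanSpace ℝ (Fin n))
    (hu : ∑ i, u i ^ 2 = 1) (hv : ∑ i, v i ^ 2 = 1) :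
    ∫ g : Fin n → ℝ,
        Real.sign (∑ i, g i * u i) * Real.sign (∑ i, g i * v i)
        ∂(Measure.pi fun _ : Fin n => gaussianReal 0 1) =
      (2 / Real.pi) * Real.arcsin (∑ i, u i * v i) := by
  have pi_pos := Real.pi_pos
  obtain ⟨ρ, hρdef⟩ : ∃ ρ : ℝ, ∑ i, u i * v i = ρ := ⟨_, rfl⟩
  rw [hρdef]
  have hunorm : ‖u‖ = 1 := norm_one_of_sum_sq hu
  have hvnorm : ‖v‖ = 1 := norm_one_of_sum_sq hv
  have hinner : ⟪u, v⟫ = ρ := by rw [euclid_inner_eq, hρdef]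
  have hρle : |ρ| ≤ 1 := by
    have := abs_real_inner_le_norm u v
    rw [hinner, hunorm, hvnorm] at this
    simpa using this
  rcases lt_or_eq_of_le hρle with hρlt | hρeq
  · -- main case |ρ| < 1
    obtain ⟨hρ1, hρ2⟩ := abs_lt.mp hρlt
    have hs2 : 0 < 1 - ρ^2 := by nlinarith
    obtain ⟨s, hsdef⟩ : ∃ s : ℝ, Real.sqrt (1 - ρ^2) = s := ⟨_, rfl⟩
    have hs : 0 < s := hsdef ▸ Real.sqrt_pos.mpr hs2
    have hss : s * s = 1 - ρ^2 := hsdef ▸ Real.mul_self_sqrt hs2.le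
    have hn : 1 < n := by
      by_contra h
      push_neg at h
      interval_cases n
      · simp at hu
      · rw [Fin.sum_univ_one] at hu hv hρdef
        have : ρ^2 = 1 := by rw [← hρdef, mul_pow, hu, hv, one_mul]
        nlinarith
    obtain ⟨w, hwdef⟩ : ∃ w : EuclideanSpace ℝ (Fin n), s⁻¹ • (v - ρ • u) = w := ⟨_, rfl⟩
    have hinner_uu : ⟪u, u⟫ = 1 := by rw [real_inner_self_eq_norm_sq, hunorm]; norm_num
    have hinner_vv : ⟪v, v⟫ = 1 := by rw [real_inner_self_eq_norm_sq, hvnorm]; norm_num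
    have hinner_vu : ⟪v, u⟫ = ρ := by rw [real_inner_comm]; exact hinner
    have huw : ⟪u, w⟫ = 0 := by
      rw [← hwdef]
      simp only [real_inner_smul_right, inner_sub_right, hinner, hinner_uu]
      ring
    have hww : ⟪w, w⟫ = 1 := by
      rw [← hwdef]
      simp only [real_inner_smul_right, real_inner_smul_left, inner_sub_right,
        inner_sub_left, hinner, hinner_uu, hinner_vv, hinner_vu]
      field_simp
      nlinarith
    have hwnorm : ‖w‖ = 1 := by
      have h2 := real_inner_self_eq_norm_sq w
      nlinarith [norm_nonneg w]
    have hdecomp : ∀ g : Fin n → ℝ,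
        ∑ i, g i * v i = ρ * (∑ i, g i * u i) + s * (∑ i, g i * w i) := by
      intro g
      have hv' : v = ρ • u + s • w := by
        rw [← hwdef, smul_smul, mul_inv_cancel₀ hs.ne', one_smul]
        abel
      calc ∑ i, g i * v i = ⟪((WithLp.equiv 2 (Fin n → ℝ)).symm g), v⟫ :=
            (euclid_inner_eq _ _).symm
        _ = ρ * ⟪((WithLp.equiv 2 (Fin n → ℝ)).symm g), u⟫
            + s * ⟪((WithLp.equiv 2 (Fin n → ℝ)).symm g), w⟫ := by
            rw [hv', inner_add_right, real_inner_smul_right, real_inner_smul_right]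
        _ = ρ * (∑ i, g i * u i) + s * (∑ i, g i * w i) := by
            rw [euclid_inner_eq, euclid_inner_eq]
            rfl
    have hmap := map_inner_pair hn u w hunorm hwnorm huw
    have hstep1 : ∫ g : Fin n → ℝ,
        Real.sign (∑ i, g i * u i) * Real.sign (∑ i, g i * v i)
        ∂(Measure.pi fun _ : Fin n => gaussianReal 0 1)
        = ∫ g : Fin n → ℝ,
          (fun p : ℝ × ℝ => Real.sign p.1 * Real.sign (ρ * p.1 + s * p.2))
            ((fun g : Fin n → ℝ => (∑ i, g i * u i, ∑ i, g i * w i)) g)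
          ∂(Measure.pi fun _ : Fin n => gaussianReal 0 1) := by
      congr 1
      funext g
      simp only
      rw [hdecomp g]
    have hPmeas : Measurable (fun g : Fin n → ℝ => (∑ i, g i * u i, ∑ i, g i * w i)) := by
      refine Measurable.prodMk ?_ ?_ <;>
        exact Finset.measurable_sum _ fun i _ => (measurable_pi_apply i).mul measurable_const
    have hF : AEStronglyMeasurable
        (fun p : ℝ × ℝ => Real.sign p.1 * Real.sign (ρ * p.1 + s * p.2))
        ((Measure.pi fun _ : Fin n => gaussianReal 0 1).map
          (fun g : Fin n → ℝ => (∑ i, g i * u i, ∑ i, g i * w i))) := by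
      refine Measurable.aestronglyMeasurable ?_
      exact (measurable_realSign.comp measurable_fst).mul
        (measurable_realSign.comp ((measurable_fst.const_mul ρ).add
          (measurable_snd.const_mul s)))
    rw [hstep1, ← integral_map hPmeas.aemeasurable hF, hmap, ← hsdef, twoD hρlt]
  · -- degenerate cases ρ = ±1
    haveI : NeZero n := ⟨by rintro rfl; simp at hu⟩
    have habs : |ρ| = 1 := hρeq
    have hXmeas : Measurable (fun g : Fin n → ℝ => ∑ i, g i * u i) :=
      Finset.measurable_sum _ fun i _ => (measurable_pi_apply i).mul measurable_const
    rcases abs_eq (by norm_num : (0:ℝ) ≤ 1) |>.mp habs with h1 | h1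
    · -- ρ = 1 : v = u
      have hveq : u = v := (inner_eq_one_iff_of_norm_eq_one (𝕜 := ℝ) hunorm hvnorm).mp (by rw [hinner, h1])
      subst hveq
      have hsm : AEStronglyMeasurable (fun x : ℝ => Real.sign x * Real.sign x)
          ((Measure.pi fun _ : Fin n => gaussianReal 0 1).map
            (fun g : Fin n → ℝ => ∑ i, g i * u i)) :=
        (measurable_realSign.mul measurable_realSign).aestronglyMeasurable
      rw [show (∫ g : Fin n → ℝ,
          Real.sign (∑ i, g i * u i) * Real.sign (∑ i, g i * u i)
          ∂(Measure.pi fun _ : Fin n => gaussianReal 0 1))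
        = ∫ g : Fin n → ℝ, (fun x => Real.sign x * Real.sign x)
            ((fun g : Fin n → ℝ => ∑ i, g i * u i) g)
          ∂(Measure.pi fun _ : Fin n => gaussianReal 0 1) from rfl,
        ← integral_map hXmeas.aemeasurable hsm,
        map_inner_single u hunorm, sign_sq_integral, h1, Real.arcsin_one]
      field_simp
    · -- ρ = -1 : v = -u
      have hveq : u = -v := by
        have hnm : ‖-v‖ = 1 := by rw [norm_neg]; exact hvnorm
        refine (inner_eq_one_iff_of_norm_eq_one (𝕜 := ℝ) hunorm hnm).mp ?_
        have h2 : ⟪u, -v⟫ = -⟪u, v⟫ := inner_neg_right _ _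
        rw [h2, hinner, h1]; norm_num
      have hveq' : v = -u := by rw [hveq, neg_neg]
      subst hveq'
      have hsm : AEStronglyMeasurable (fun x : ℝ => -(Real.sign x * Real.sign x))
          ((Measure.pi fun _ : Fin n => gaussianReal 0 1).map
            (fun g : Fin n → ℝ => ∑ i, g i * u i)) :=
        (measurable_realSign.mul measurable_realSign).neg.aestronglyMeasurable
      have hstep : ∫ g : Fin n → ℝ,
          Real.sign (∑ i, g i * u i) * Real.sign (∑ i, g i * (-u) i)
          ∂(Measure.pi fun _ : Fin n => gaussianReal 0 1)
          = ∫ g : Fin n → ℝ, (fun x => -(Real.sign x * Real.sign x))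
              ((fun g : Fin n → ℝ => ∑ i, g i * u i) g)
            ∂(Measure.pi fun _ : Fin n => gaussianReal 0 1) := by
        congr 1
        funext g
        simp only
        have hsum : ∑ i, g i * (-u) i = -(∑ i, g i * u i) := by
          rw [← Finset.sum_neg_distrib]
          refine Finset.sum_congr rfl fun i _ => ?_
          have : (-u) i = -(u i) := rfl
          rw [this, mul_neg]
        rw [hsum, Real.sign_neg]
        ring
      rw [hstep, ← integral_map hXmeas.aemeasurable hsm,
        map_inner_single u hunorm, integral_neg, sign_sq_integral, h1, Real.arcsin_neg,
        Real.arcsin_one]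
      field_simp

/-- Grothendieck's identity. For a standard Gaussian vector g in ℝⁿ and
unit vectors u, v: E[sign⟨g,u⟩ · sign⟨g,v⟩] = (2/π) arcsin⟨u,v⟩. -/
theorem stmt_11 {n : ℕ} (u v : Fin n → ℝ)
    (hu : ∑ i, u i ^ 2 = 1) (hv : ∑ i, v i ^ 2 = 1) :
    ∫ g : Fin n → ℝ,
        Real.sign (∑ i, g i * u i) * Real.sign (∑ i, g i * v i)
        ∂(Measure.pi fun _ : Fin n => gaussianReal 0 1) =
      (2 / Real.pi) * Real.arcsin (∑ i, u i * v i) := by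
  exact stmt_aux ((WithLp.equiv 2 (Fin n → ℝ)).symm u) ((WithLp.equiv 2 (Fin n → ℝ)).symm v) hu hv
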